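/- Let n ≥ 3 and let A be an n×n complex matrix with upper-left (n−1)×(n−1) submatrix A^(n-1) and upper-left (n−2)×(n−2) submatrix A^(n-2). Assume det(A^(n-1) − x·Id) = ∏_{l=1}^{n-1}(λ_l − x) with pairwise distinct λ_1,…,λ_{n-1}, and assume that no λ_i is an eigenvalue of A^(n-2). Define 𝒫_{jk} = (−1)^{j+k} · det of the submatrix of A^(n-1) − λ_k·Id obtained by deleting row n−1 and column j, 𝒬_{ij} = (−1)^{i+j} · det of the submatrix of A^(n-1) − λ_i·Id obtained by deleting row j and column n−1, and D_i = ∏_{l≠i}(λ_l − λ_i) · det(A^(n-2) − λ_i·Id_{n-2}). Then for each 1 ≤ i ≤ n−1 the spectral projection pr_i := ∏_{l≠i}(A^(n-1) − λ_l·Id)/(λ_i − λ_l) admits the rank-one factorization (pr_i)_{kj} = 𝒫_{ki} · 𝒬_{ij} / D_i for all 1 ≤ k, j ≤ n−1. -/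

import Mathlib

open Matrix Finset Polynomial

noncomputable section

/-- The Lagrange spectral projection `pr_i = ∏_{l≠i} (B − λ_l·Id)/(λ_i − λ_l)`,
realized as the evaluation at `B` of the corresponding polynomial. -/
def lagrangePr (k : ℕ) (B : Matrix (Fin (k+1)) (Fin (k+1)) ℂ)
    (lam : Fin (k+1) → ℂ) (i : Fin (k+1)) : Matrix (Fin (k+1)) (Fin (k+1)) ℂ :=
  Polynomial.aeval B
    (∏ l ∈ Finset.univ.erase i,
      (Polynomial.C (lam i - lam l)⁻¹ * (Polynomial.X - Polynomial.C (lam l))))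

variable {n : ℕ}

lemma charpoly_eq (B : Matrix (Fin n) (Fin n) ℂ) (lam : Fin n → ℂ)
    (hchar : ∀ x : ℂ, (B - x • 1).det = ∏ l, (lam l - x)) :
    B.charpoly = ∏ l, (X - C (lam l)) := by
  apply Polynomial.funext; intro x
  have h1 : eval x B.charpoly = (Matrix.scalar (Fin n) x - B).det := by
    rw [Matrix.charpoly, ← Polynomial.coe_evalRingHom, RingHom.map_det]
    congr 1
    ext i j
    simp [Matrix.charmatrix_apply, Matrix.diagonal_apply, apply_ite]
  have h2 : (Matrix.scalar (Fin n) x - B) = -(B - x • 1) := by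
    rw [Matrix.smul_one_eq_diagonal]
    simp [Matrix.scalar]
  rw [h1, h2, Matrix.det_neg, hchar x, eval_prod]
  simp only [eval_sub, eval_X, eval_C]
  have : ∏ l, (x - lam l) = ∏ l, ((-1 : ℂ) * (lam l - x)) := by
    apply Finset.prod_congr rfl; intro l _; ring
  rw [this, Finset.prod_mul_distrib, Finset.prod_const, Finset.card_univ]

lemma aeval_prod_eq_zero (B : Matrix (Fin n) (Fin n) ℂ) (lam : Fin n → ℂ)
    (hchar : ∀ x : ℂ, (B - x • 1).det = ∏ l, (lam l - x)) :
    Polynomial.aeval B (∏ l, (X - C (lam l))) = 0 := by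
  rw [← charpoly_eq B lam hchar]
  exact Matrix.aeval_self_charpoly B

variable {k : ℕ}

lemma lagrangePr_eq_basis (B : Matrix (Fin (k+1)) (Fin (k+1)) ℂ) (lam : Fin (k+1) → ℂ)
    (i : Fin (k+1)) :
    lagrangePr k B lam i = Polynomial.aeval B (Lagrange.basis Finset.univ lam i) := rfl

lemma sum_lagrangePr (B : Matrix (Fin (k+1)) (Fin (k+1)) ℂ) (lam : Fin (k+1) → ℂ)
    (hdist : Function.Injective lam) :
    ∑ i, lagrangePr k B lam i = 1 := by
  simp only [lagrangePr_eq_basis]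
  rw [← map_sum, Lagrange.sum_basis (hdist.injOn) univ_nonempty, _root_.map_one]

lemma mul_lagrangePr (B : Matrix (Fin (k+1)) (Fin (k+1)) ℂ) (lam : Fin (k+1) → ℂ)
    (hchar : ∀ x : ℂ, (B - x • 1).det = ∏ l, (lam l - x)) (i : Fin (k+1)) :
    (B - lam i • 1) * lagrangePr k B lam i = 0 := by
  have hB : B - lam i • 1 = Polynomial.aeval B (X - C (lam i)) := by
    simp [Algebra.algebraMap_eq_smul_one]
  rw [hB, lagrangePr_eq_basis, ← _root_.map_mul]
  have : (X - C (lam i)) * Lagrange.basis Finset.univ lam i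
      = C (∏ l ∈ Finset.univ.erase i, (lam i - lam l)⁻¹) * ∏ l, (X - C (lam l)) := by
    unfold Lagrange.basis Lagrange.basisDivisor
    rw [Finset.prod_mul_distrib, ← map_prod]
    rw [mul_left_comm, Finset.mul_prod_erase Finset.univ (fun l => X - C (lam l)) (Finset.mem_univ i)]
  rw [this, _root_.map_mul, aeval_prod_eq_zero B lam hchar, mul_zero]
lemma adjugate_eq_smul_lagrangePr (B : Matrix (Fin (k+1)) (Fin (k+1)) ℂ) (lam : Fin (k+1) → ℂ)
    (hdist : Function.Injective lam)
    (hchar : ∀ x : ℂ, (B - x • 1).det = ∏ l, (lam l - x)) (i : Fin (k+1)) :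
    adjugate (B - lam i • 1)
      = (∏ l ∈ Finset.univ.erase i, (lam l - lam i)) • lagrangePr k B lam i := by
  have key : ∀ x : ℂ, (∀ l, lam l ≠ x) →
      adjugate (B - x • 1)
        = ∑ i', (∏ l ∈ Finset.univ.erase i', (lam l - x)) • lagrangePr k B lam i' := by
    intro x hx
    have hdet0 : (B - x • 1).det ≠ 0 := by
      rw [hchar x]
      exact Finset.prod_ne_zero_iff.mpr fun l _ => sub_ne_zero.mpr (hx l)
    have hU : IsUnit (B - x • 1) :=
      (Matrix.isUnit_iff_isUnit_det _).mpr (isUnit_iff_ne_zero.mpr hdet0)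
    refine hU.mul_left_cancel ?_
    rw [Matrix.mul_adjugate, Finset.mul_sum]
    have hterm : ∀ i', (B - x • 1) *
          ((∏ l ∈ Finset.univ.erase i', (lam l - x)) • lagrangePr k B lam i')
        = (B - x • 1).det • lagrangePr k B lam i' := by
      intro i'
      rw [Matrix.mul_smul]
      have h1 : (B - x • 1) * lagrangePr k B lam i'
          = (lam i' - x) • lagrangePr k B lam i' := by
        have hsplit : B - x • 1 = (B - lam i' • 1) + (lam i' - x) • 1 := by
          rw [sub_smul]; abel
        rw [hsplit, add_mul, mul_lagrangePr B lam hchar i', zero_add, smul_mul_assoc, one_mul]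
      rw [h1, smul_smul, hchar x, ← Finset.prod_erase_mul Finset.univ _ (Finset.mem_univ i')]
    rw [Finset.sum_congr rfl fun i' _ => hterm i', ← Finset.smul_sum,
      sum_lagrangePr B lam hdist]
  -- polynomial-matrix identity
  set Mp : Matrix (Fin (k+1)) (Fin (k+1)) ℂ[X] := B.map C - (X : ℂ[X]) • 1 with hMp
  set Gp : Matrix (Fin (k+1)) (Fin (k+1)) ℂ[X] :=
    ∑ i', (∏ l ∈ Finset.univ.erase i', (C (lam l) - X)) • (lagrangePr k B lam i').map C with hGp
  have hmap : ∀ x : ℂ, (RingHom.mapMatrix (evalRingHom x)) Mp = B - x • 1 := by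
    intro x; ext a b
    by_cases hab : a = b <;>
      simp [hMp, Matrix.map_apply, Matrix.one_apply, hab]
  have hmapG : ∀ x : ℂ, (RingHom.mapMatrix (evalRingHom x)) Gp
      = ∑ i', (∏ l ∈ Finset.univ.erase i', (lam l - x)) • lagrangePr k B lam i' := by
    intro x; ext a b
    simp [hGp, Matrix.sum_apply, Matrix.map_apply, eval_prod]
  have hpoly : adjugate Mp = Gp := by
    refine Matrix.ext fun a b => ?_
    have hsub : adjugate Mp a b - Gp a b = 0 := by
      apply Polynomial.eq_zero_of_infinite_isRoot
      apply Set.Infinite.mono ?_ (Set.Finite.infinite_compl (Set.finite_range lam))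
      intro x hx
      have hx' : ∀ l, lam l ≠ x := fun l h => hx ⟨l, h⟩
      have e1 : eval x (adjugate Mp a b) = adjugate (B - x • 1) a b := by
        rw [← hmap x, ← RingHom.map_adjugate]; rfl
      have e2 : eval x (Gp a b)
          = (∑ i', (∏ l ∈ Finset.univ.erase i', (lam l - x)) • lagrangePr k B lam i') a b := by
        rw [← hmapG x]; rfl
      simp only [Set.mem_setOf_eq, IsRoot, eval_sub, e1, e2, key x hx', sub_self]
    exact sub_eq_zero.mp hsub
  have hfin := congrArg (fun M => (RingHom.mapMatrix (evalRingHom (lam i))) M) hpoly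
  rw [RingHom.map_adjugate, hmap (lam i), hmapG (lam i)] at hfin
  rw [hfin, Finset.sum_eq_single i (fun i' _ hne => by
    have h0 : (∏ l ∈ Finset.univ.erase i', (lam l - lam i)) = 0 :=
      Finset.prod_eq_zero (Finset.mem_erase.mpr ⟨hne.symm, Finset.mem_univ i⟩) (sub_self _)
    rw [h0, zero_smul]) (by simp)]
lemma adjugate_rank_one {n : ℕ} (M : Matrix (Fin (n+1)) (Fin (n+1)) ℂ) (hdet : M.det = 0)
    (hsub : IsUnit (M.submatrix Fin.castSucc Fin.castSucc)) (k j : Fin (n+1)) :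
    adjugate M (Fin.last n) (Fin.last n) * adjugate M k j
      = adjugate M k (Fin.last n) * adjugate M (Fin.last n) j := by
  set L := Fin.last n
  set w : Fin (n+1) → ℂ := fun j' =>
    adjugate M L L * adjugate M k j' - adjugate M k L * adjugate M L j' with hw
  have hrow : ∀ (r : Fin (n+1)) (j' : Fin (n+1)), ∑ a, adjugate M r a * M a j' = 0 := by
    intro r j'
    have := congrFun (congrFun (Matrix.adjugate_mul M) r) j'
    rw [hdet, zero_smul] at this
    simpa [Matrix.mul_apply] using this
  have hwM : ∀ j', ∑ a, w a * M a j' = 0 := by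
    intro j'
    simp only [hw, sub_mul, mul_assoc, Finset.sum_sub_distrib, ← Finset.mul_sum,
      hrow k j', hrow L j', mul_zero, sub_zero]
  have hwL : w L = 0 := by simp [hw, mul_comm]
  have hw' : (fun a : Fin n => w (Fin.castSucc a)) = 0 := by
    have hinj := Matrix.vecMul_injective_iff_isUnit.mpr hsub
    apply hinj
    ext j'
    have h0 := hwM (Fin.castSucc j')
    rw [Fin.sum_univ_castSucc, hwL, zero_mul, add_zero] at h0
    simpa [Matrix.vecMul, dotProduct, Matrix.submatrix_apply] using h0
  have hall : ∀ a, w a = 0 := by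
    intro a
    rcases Fin.lastCases (motive := fun a => w a = 0) hwL (fun a0 => congrFun hw' a0) a with h
    exact h
  have h := hall j
  rw [hw] at h
  exact sub_eq_zero.mp h
lemma neg_one_pow_sq (a : ℕ) : (-1 : ℂ)^a * (-1 : ℂ)^a = 1 := by
  rw [← pow_add, ← two_mul, pow_mul, neg_one_sq, one_pow]

/-- rank-one factorization `(pr_i)_{kj} = 𝒫_{ki}·𝒬_{ij}/D_i` of the
spectral projections of the upper-left `(n−1) × (n−1)` submatrix of `A`
(here `n = m+3 ≥ 3`). -/
theorem stmt11 (m : ℕ) (A : Matrix (Fin (m+3)) (Fin (m+3)) ℂ)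
    (lam : Fin (m+2) → ℂ) (hdist : Function.Injective lam)
    (hchar : ∀ x : ℂ,
      (A.submatrix Fin.castSucc Fin.castSucc
        - x • (1 : Matrix (Fin (m+2)) (Fin (m+2)) ℂ)).det = ∏ l, (lam l - x))
    (hspec : ∀ i : Fin (m+2),
      lam i ∉ spectrum ℂ
        (A.submatrix (Fin.castLE (show m+1 ≤ m+3 by omega))
          (Fin.castLE (show m+1 ≤ m+3 by omega)))) :
    -- `B = A^(n-1)`, `B2 = A^(n-2)`
    let B : Matrix (Fin (m+2)) (Fin (m+2)) ℂ := A.submatrix Fin.castSucc Fin.castSucc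
    let B2 : Matrix (Fin (m+1)) (Fin (m+1)) ℂ :=
      A.submatrix (Fin.castLE (show m+1 ≤ m+3 by omega)) (Fin.castLE (show m+1 ≤ m+3 by omega))
    -- 𝒫_{jk} = (−1)^{j+k} · minor of `B − λ_k·Id` deleting row n−1 and column j
    let P : Matrix (Fin (m+2)) (Fin (m+2)) ℂ := fun j k =>
      (-1 : ℂ) ^ (j.val + k.val) *
        ((B - lam k • 1).submatrix (Fin.last (m+1)).succAbove j.succAbove).det
    -- 𝒬_{ij} = (−1)^{i+j} · minor of `B − λ_i·Id` deleting row j and column n−1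
    let Q : Matrix (Fin (m+2)) (Fin (m+2)) ℂ := fun i j =>
      (-1 : ℂ) ^ (i.val + j.val) *
        ((B - lam i • 1).submatrix j.succAbove (Fin.last (m+1)).succAbove).det
    let D : Fin (m+2) → ℂ := fun i =>
      (∏ l ∈ Finset.univ.erase i, (lam l - lam i)) * (B2 - lam i • 1).det
    ∀ (i k j : Fin (m+2)), lagrangePr (m+1) B lam i k j = P k i * Q i j / D i := by
  intro B B2 P Q D i k j
  have hcharB : ∀ x : ℂ, (B - x • 1).det = ∏ l, (lam l - x) := hchar
  set L : Fin (m+2) := Fin.last (m+1) with hL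
  set M : Matrix (Fin (m+2)) (Fin (m+2)) ℂ := B - lam i • 1 with hM
  -- the deleted-last-row-and-column submatrix of M is B2 - lam i • 1
  have hsubm : M.submatrix Fin.castSucc Fin.castSucc = B2 - lam i • 1 := by
    ext a b
    have hidx : ∀ c : Fin (m+1), Fin.castSucc (Fin.castSucc c)
        = Fin.castLE (show m+1 ≤ m+3 by omega) c := fun c => Fin.ext (by simp)
    by_cases hab : a = b <;>
      simp [hM, hab, Matrix.one_apply, B, B2, hidx, Fin.castSucc_inj]
  -- B2 - lam i • 1 is invertible
  have hU2 : IsUnit (B2 - lam i • 1) := by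
    have h := spectrum.notMem_iff.mp (hspec i)
    rw [Algebra.algebraMap_eq_smul_one] at h
    have : B2 - lam i • 1 = -(lam i • 1 - B2) := by abel
    rw [this]
    exact h.neg
  have hdet2 : (B2 - lam i • 1).det ≠ 0 := by
    intro h0
    exact (by simpa [h0] using (Matrix.isUnit_iff_isUnit_det _).mp hU2 : IsUnit (0:ℂ)).ne_zero rfl
  -- det M = 0
  have hdet0 : M.det = 0 := by
    rw [hM, hcharB]
    exact Finset.prod_eq_zero (Finset.mem_univ i) (sub_self _)
  -- rank-one identity
  have rank1 := adjugate_rank_one M hdet0 (hsubm ▸ hU2) k j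
  -- adjugate in terms of lagrangePr
  have hadj := adjugate_eq_smul_lagrangePr B lam hdist hcharB i
  set c : ℂ := ∏ l ∈ Finset.univ.erase i, (lam l - lam i) with hc
  have hadjkj : adjugate M k j = c * lagrangePr (m+1) B lam i k j := by
    rw [hM, hadj]; rfl
  have hcne : c ≠ 0 := by
    rw [hc]
    refine Finset.prod_ne_zero_iff.mpr fun l hl => sub_ne_zero.mpr fun h => ?_
    exact (Finset.mem_erase.mp hl).1 (hdist h)
  -- the corner entry of the adjugate
  have hcorner : adjugate M L L = (B2 - lam i • 1).det := by
    rw [Matrix.adjugate_fin_succ_eq_det_submatrix, hL, Fin.succAbove_last, hsubm,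
      show ((Fin.last (m+1)).val + (Fin.last (m+1)).val) = 2 * (Fin.last (m+1)).val from by ring,
      pow_mul, neg_one_sq, one_pow, one_mul]
  -- signs
  have hsigns : adjugate M k L * adjugate M L j = P k i * Q i j := by
    rw [Matrix.adjugate_fin_succ_eq_det_submatrix, Matrix.adjugate_fin_succ_eq_det_submatrix]
    have hPd : P k i = (-1 : ℂ) ^ (k.val + i.val)
        * (M.submatrix L.succAbove k.succAbove).det := by rw [hM, hL]
    have hQd : Q i j = (-1 : ℂ) ^ (i.val + j.val)
        * (M.submatrix j.succAbove L.succAbove).det := by rw [hM, hL]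
    rw [hPd, hQd]
    have h1 := neg_one_pow_sq L.val
    have h2 := neg_one_pow_sq i.val
    linear_combination ((-1:ℂ)^k.val * (-1:ℂ)^j.val
        * (M.submatrix L.succAbove k.succAbove).det
        * (M.submatrix j.succAbove L.succAbove).det) * (h1 - h2)
  -- D is nonzero
  have hD : D i = c * (B2 - lam i • 1).det := rfl
  have hDne : D i ≠ 0 := by rw [hD]; exact mul_ne_zero hcne hdet2
  rw [eq_div_iff hDne]
  calc lagrangePr (m+1) B lam i k j * D i
      = adjugate M L L * (c * lagrangePr (m+1) B lam i k j) := by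
        rw [hcorner, hD]; ring
    _ = adjugate M L L * adjugate M k j := by rw [hadjkj]
    _ = adjugate M k L * adjugate M L j := rank1
    _ = P k i * Q i j := hsigns
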